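/- Let p_{ij} ≥ 0 (1 ≤ i ≤ m, 1 ≤ j ≤ n) be processing times on unrelated machines, p_{[j]} = min_i p_{ij}, and let C* be the minimum over all assignments σ: jobs → machines of max_i Σ_{σ(j)=i} p_{ij}. If C* ≤ (Σ_j p_{[j]})/√m, then for any assignment with sorted loads T₁ ≥ ⋯ ≥ T_m and the optimal-makespan assignment with sorted loads L₁ ≥ ⋯ ≥ L_m, we have Σ_{k=1}^i L_k ≤ √m · Σ_{k=1}^i T_k for all i, since i·L₁ ≤ √m·(i/m)·Σ_j p_{[j]} ≤ √m·Σ_{k=1}^i T_k. -/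

import Mathlib

/-- Load of machine `i` under assignment `σ` of jobs to unrelated machines with
processing times `p i j`. -/
noncomputable def mload {m n : ℕ} (p : Fin m → Fin n → ℝ) (σ : Fin n → Fin m)
    (i : Fin m) : ℝ :=
  ∑ j, if σ j = i then p i j else 0

/-- Makespan of assignment `σ`: the largest machine load. -/
noncomputable def makespan {m n : ℕ} (p : Fin m → Fin n → ℝ) (σ : Fin n → Fin m) : ℝ :=
  sSup (Set.range (mload p σ))

/-- Sum of the `k` largest entries of a finite real vector. -/
noncomputable def topSum {m : ℕ} (X : Fin m → ℝ) (k : ℕ) : ℝ :=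
  sSup {v : ℝ | ∃ s : Finset (Fin m), s.card = k ∧ v = ∑ i ∈ s, X i}

lemma topSum_set_finite {m : ℕ} (X : Fin m → ℝ) (k : ℕ) :
    {v : ℝ | ∃ s : Finset (Fin m), s.card = k ∧ v = ∑ i ∈ s, X i}.Finite := by
  have h : {v : ℝ | ∃ s : Finset (Fin m), s.card = k ∧ v = ∑ i ∈ s, X i}
      ⊆ (fun s : Finset (Fin m) => ∑ i ∈ s, X i) '' Set.univ := by
    rintro v ⟨s, -, rfl⟩; exact ⟨s, trivial, rfl⟩
  exact (Set.finite_univ.image _).subset h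

lemma topSum_spec {m : ℕ} (X : Fin m → ℝ) {k : ℕ} (hk : k ≤ m) :
    ∃ s : Finset (Fin m), s.card = k ∧ topSum X k = ∑ i ∈ s, X i ∧
      ∀ t : Finset (Fin m), t.card = k → ∑ i ∈ t, X i ≤ topSum X k := by
  have hfin := topSum_set_finite X k
  obtain ⟨s0, -, hs0⟩ := Finset.exists_subset_card_eq (s := (Finset.univ : Finset (Fin m))) (n := k)
    (by simpa using hk)
  have hne : {v : ℝ | ∃ s : Finset (Fin m), s.card = k ∧ v = ∑ i ∈ s, X i}.Nonempty :=
    ⟨_, s0, hs0, rfl⟩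
  have hmem := hne.csSup_mem hfin
  obtain ⟨s, hcard, heq⟩ := hmem
  exact ⟨s, hcard, heq, fun t ht => le_csSup hfin.bddAbove ⟨t, ht, rfl⟩⟩

lemma topSum_zero {m : ℕ} (X : Fin m → ℝ) : topSum X 0 = 0 := by
  have : {v : ℝ | ∃ s : Finset (Fin m), s.card = 0 ∧ v = ∑ i ∈ s, X i} = {0} := by
    ext v
    constructor
    · rintro ⟨s, hs, rfl⟩
      simp [Finset.card_eq_zero.mp hs]
    · rintro rfl
      exact ⟨∅, by simp⟩
  simp [topSum, this]

/-- The sum of the `k` largest entries is at least `k/m` of the total. -/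
lemma topSum_ge {m : ℕ} (hm : 0 < m) (X : Fin m → ℝ) {k : ℕ} (hk : k ≤ m) :
    (k : ℝ) / m * ∑ i, X i ≤ topSum X k := by
  rcases Nat.eq_zero_or_pos k with rfl | hk0
  · simp [topSum_zero]
  obtain ⟨s, hcard, heq, hmax⟩ := topSum_spec X hk
  have hsne : s.Nonempty := Finset.card_pos.mp (hcard ▸ hk0)
  obtain ⟨k₀, hk₀s, hk₀min⟩ := s.exists_min_image X hsne
  -- every element outside s is at most X k₀
  have hswap : ∀ l ∉ s, X l ≤ X k₀ := by
    intro l hl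
    have hle := hmax (insert l (s.erase k₀)) (by
      rw [Finset.card_insert_of_notMem (fun h => hl (Finset.mem_of_mem_erase h)),
        Finset.card_erase_of_mem hk₀s, hcard]
      omega)
    rw [Finset.sum_insert (fun h => hl (Finset.mem_of_mem_erase h)),
      Finset.sum_erase_eq_sub hk₀s, heq] at hle
    linarith [hle]
  set T := ∑ i, X i with hT
  set A := ∑ i ∈ s, X i with hA
  set B := ∑ i ∈ Finset.univ \ s, X i with hB
  have hTAB : T = A + B := by
    rw [hT, hA, hB, ← Finset.sum_sdiff (Finset.subset_univ s)]; ring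
  have hBle : B ≤ ((m : ℝ) - k) * X k₀ := by
    have h1 : B ≤ (Finset.univ \ s).card • X k₀ :=
      Finset.sum_le_card_nsmul _ _ _ (fun i hi => hswap i (Finset.mem_sdiff.mp hi).2)
    have h2 : (Finset.univ \ s).card = m - k := by
      rw [Finset.card_sdiff_of_subset (Finset.subset_univ s), hcard, Finset.card_univ,
        Fintype.card_fin]
    rw [h2, nsmul_eq_mul, Nat.cast_sub hk] at h1
    exact h1
  have hAge : (k : ℝ) * X k₀ ≤ A := by
    have h1 : s.card • X k₀ ≤ A := Finset.card_nsmul_le_sum _ _ _ (fun i hi => hk₀min i hi)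
    rwa [hcard, nsmul_eq_mul] at h1
  rw [heq]
  rw [div_mul_eq_mul_div, div_le_iff₀ (by exact_mod_cast hm)]
  have hkm : (k : ℝ) ≤ m := by exact_mod_cast hk
  have hk0' : (0 : ℝ) ≤ k := Nat.cast_nonneg k
  nlinarith [mul_le_mul_of_nonneg_left hAge (by linarith : (0:ℝ) ≤ (m:ℝ) - k),
    mul_le_mul_of_nonneg_left hBle hk0']

/-- Case 1 of `WAR ≤ √m` on unrelated machines: if the minimum makespan `C*`
satisfies `C* ≤ (Σ_j p_[j])/√m` where `p_[j] = min_i p_{ij}`, then for the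
optimal-makespan assignment `σopt` and any assignment `τ`, the sorted-load
prefix sums satisfy `Σ_{k≤i} L_k ≤ √m · Σ_{k≤i} T_k` for all `i`. -/
theorem war_sqrt_case1 (m n : ℕ) (hm : 0 < m) (p : Fin m → Fin n → ℝ)
    (hp : ∀ i j, 0 ≤ p i j)
    (σopt : Fin n → Fin m) (hopt : ∀ σ : Fin n → Fin m, makespan p σopt ≤ makespan p σ)
    (hcase : makespan p σopt ≤
      (∑ j, sInf (Set.range fun i => p i j)) / Real.sqrt m)
    (τ : Fin n → Fin m) :
    ∀ i : ℕ, i ≤ m →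
      topSum (mload p σopt) i ≤ Real.sqrt m * topSum (mload p τ) i := by
  intro i hi
  rcases Nat.eq_zero_or_pos i with rfl | hi0
  · simp [topSum_zero]
  haveI : Nonempty (Fin m) := ⟨⟨0, hm⟩⟩
  set P := ∑ j, sInf (Set.range fun i => p i j) with hP
  set Mk := makespan p σopt with hMk
  -- each load is at most the makespan
  have hload_le : ∀ k : Fin m, mload p σopt k ≤ Mk := fun k =>
    le_csSup (Set.finite_range _).bddAbove (Set.mem_range_self k)
  -- topSum L i ≤ i * Mk
  obtain ⟨s, hcard, heq, -⟩ := topSum_spec (mload p σopt) hi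
  have h1 : topSum (mload p σopt) i ≤ (i : ℝ) * Mk := by
    rw [heq]
    calc ∑ k ∈ s, mload p σopt k ≤ ∑ _k ∈ s, Mk := Finset.sum_le_sum (fun k _ => hload_le k)
      _ = (i : ℝ) * Mk := by rw [Finset.sum_const, hcard, nsmul_eq_mul]
  -- P ≤ total load of τ
  have h2 : P ≤ ∑ k, mload p τ k := by
    have htot : ∑ k, mload p τ k = ∑ j, p (τ j) j := by
      unfold mload
      rw [Finset.sum_comm]
      congr 1
      ext j
      simp
    rw [htot, hP]
    apply Finset.sum_le_sum
    intro j _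
    exact csInf_le (Set.finite_range _).bddBelow (Set.mem_range_self (τ j))
  have h3 := topSum_ge hm (mload p τ) hi
  have hsp : (0 : ℝ) < Real.sqrt m := Real.sqrt_pos.mpr (by exact_mod_cast hm)
  have hsm : Real.sqrt m * Real.sqrt m = m := Real.mul_self_sqrt (Nat.cast_nonneg m)
  have key : (i : ℝ) * (P / Real.sqrt m) = Real.sqrt m * ((i : ℝ) / m * P) := by
    rw [eq_comm]
    field_simp
    linear_combination P * hsm
  have him : (0 : ℝ) ≤ (i : ℝ) / m := by positivity
  calc topSum (mload p σopt) i ≤ (i : ℝ) * Mk := h1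
    _ ≤ (i : ℝ) * (P / Real.sqrt m) :=
        mul_le_mul_of_nonneg_left hcase (Nat.cast_nonneg i)
    _ = Real.sqrt m * ((i : ℝ) / m * P) := key
    _ ≤ Real.sqrt m * ((i : ℝ) / m * ∑ k, mload p τ k) := by
        apply mul_le_mul_of_nonneg_left _ hsp.le
        exact mul_le_mul_of_nonneg_left h2 him
    _ ≤ Real.sqrt m * topSum (mload p τ) i :=
        mul_le_mul_of_nonneg_left h3 hsp.le
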